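/- arXiv:2308.02059 — 2 statements merged into one kernel-verified Lean document; each statement's English description precedes it below -/
import Mathlib

section
/- For d ≥ 1, the number v_d(n) of d-restricted directed column-convex polyominoes of area n, whose generating function is V_d(x) = (1−2x+2x²−x^{d+1})/((1−x)(1−2x+x²−x^{d+1})), satisfies v_d(n) = ∑_{k=0}^{⌊(n+d−2)/d⌋} C(n−(d−1)(k−1), 2k) for all n ≥ 1. -/
open PowerSeries

private def sfun (d n : ℕ) : ℕ :=
  ∑ k ∈ Finset.range (n + 1), Nat.choose (n + (d - 1) - (d - 1) * k) (2 * k)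

private def s1fun (d n : ℕ) : ℕ :=
  ∑ k ∈ Finset.range n, Nat.choose (n - 1 - (d - 1) * k) (2 * k + 1)

private def s2fun (d n : ℕ) : ℕ :=
  ∑ k ∈ Finset.range n, Nat.choose (n - 2 - (d - 1) * k) (2 * k)

private lemma pascal_sub (a b j : ℕ) (h : j ≠ 0 ∨ b ≤ a) :
    (a + 1 - b).choose (j + 1) = (a - b).choose (j + 1) + (a - b).choose j := by
  rcases le_or_gt b a with hba | hba
  · have h1 : a + 1 - b = (a - b) + 1 := by omega
    rw [h1, Nat.choose_succ_succ, Nat.add_comm]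
  · have h1 : a + 1 - b = 0 := by omega
    have h2 : a - b = 0 := by omega
    rcases h with h | h
    · obtain ⟨j, rfl⟩ := Nat.exists_eq_succ_of_ne_zero h
      simp [h1, h2]
    · omega

private lemma term1 (d m k : ℕ) :
    (m + 1 + (d - 1) - (d - 1) * (k + 1)).choose (2 * (k + 1)) =
    (m + (d - 1) - (d - 1) * (k + 1)).choose (2 * (k + 1)) +
      (m - (d - 1) * k).choose (2 * k + 1) := by
  have h1 : m + 1 + (d - 1) - (d - 1) * (k + 1) = m + 1 - (d - 1) * k := by
    rw [Nat.mul_succ]; generalize (d - 1) * k = b; omega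
  have h2 : m + (d - 1) - (d - 1) * (k + 1) = m - (d - 1) * k := by
    rw [Nat.mul_succ]; generalize (d - 1) * k = b; omega
  have h3 : 2 * (k + 1) = 2 * k + 1 + 1 := by ring
  rw [h1, h2, h3]
  exact pascal_sub m ((d - 1) * k) (2 * k + 1) (Or.inl (by omega))

private lemma L1 (d m : ℕ) : sfun d (m + 1) = sfun d m + s1fun d (m + 1) := by
  unfold sfun s1fun
  rw [Finset.sum_range_succ' _ (m + 1),
    Finset.sum_range_succ' (fun k => Nat.choose (m + (d - 1) - (d - 1) * k) (2 * k)) m]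
  simp only [Nat.mul_zero, Nat.sub_zero, Nat.choose_zero_right]
  have hsplit : ∀ k ∈ Finset.range (m + 1),
      (m + 1 + (d - 1) - (d - 1) * (k + 1)).choose (2 * (k + 1)) =
      (m + (d - 1) - (d - 1) * (k + 1)).choose (2 * (k + 1)) +
        (m + 1 - 1 - (d - 1) * k).choose (2 * k + 1) := by
    intro k _
    simpa using term1 d m k
  rw [Finset.sum_congr rfl hsplit, Finset.sum_add_distrib,
    Finset.sum_range_succ _ m]
  have hg : (m + (d - 1) - (d - 1) * (m + 1)).choose (2 * (m + 1)) = 0 := by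
    apply Nat.choose_eq_zero_of_lt
    rw [Nat.mul_succ]; generalize (d - 1) * m = b; omega
  rw [hg]
  ring

private lemma L2 (d n : ℕ) : s1fun d (n + 2) = s1fun d (n + 1) + s2fun d (n + 2) := by
  unfold s1fun s2fun
  have hsplit : ∀ k ∈ Finset.range (n + 2),
      (n + 2 - 1 - (d - 1) * k).choose (2 * k + 1) =
      (n + 1 - 1 - (d - 1) * k).choose (2 * k + 1) +
        (n + 2 - 2 - (d - 1) * k).choose (2 * k) := by
    intro k _
    have e1 : n + 2 - 1 - (d - 1) * k = n + 1 - (d - 1) * k := by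
      generalize (d - 1) * k = b; omega
    have e2 : n + 1 - 1 - (d - 1) * k = n - (d - 1) * k := by
      generalize (d - 1) * k = b; omega
    have e3 : n + 2 - 2 - (d - 1) * k = n - (d - 1) * k := by
      generalize (d - 1) * k = b; omega
    rw [e1, e2, e3]
    apply pascal_sub n ((d - 1) * k) (2 * k)
    rcases Nat.eq_zero_or_pos k with h | h
    · subst h; exact Or.inr (by simp)
    · exact Or.inl (by omega)
  rw [Finset.sum_congr rfl hsplit, Finset.sum_add_distrib,
    Finset.sum_range_succ _ (n + 1)]
  have hz : (n + 1 - 1 - (d - 1) * (n + 1)).choose (2 * (n + 1) + 1) = 0 := by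
    apply Nat.choose_eq_zero_of_lt
    generalize (d - 1) * (n + 1) = b; omega
  rw [hz]
  ring

private lemma L3 (d n : ℕ) (hd : 1 ≤ d) :
    s2fun d (n + 3) = s2fun d (n + 2) + s1fun d (n + 2 - d) := by
  unfold s2fun s1fun
  rw [Finset.sum_range_succ' _ (n + 2),
    Finset.sum_range_succ' (fun k => Nat.choose (n + 2 - 2 - (d - 1) * k) (2 * k)) (n + 1)]
  simp only [Nat.mul_zero, Nat.sub_zero, Nat.choose_zero_right]
  have hsplit : ∀ k ∈ Finset.range (n + 2),
      (n + 3 - 2 - (d - 1) * (k + 1)).choose (2 * (k + 1)) =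
      (n + 2 - 2 - (d - 1) * (k + 1)).choose (2 * (k + 1)) +
        (n - (d - 1) * (k + 1)).choose (2 * k + 1) := by
    intro k _
    have e1 : n + 3 - 2 - (d - 1) * (k + 1) = n + 1 - (d - 1) * (k + 1) := by
      generalize (d - 1) * (k + 1) = b; omega
    have e2 : n + 2 - 2 - (d - 1) * (k + 1) = n - (d - 1) * (k + 1) := by
      generalize (d - 1) * (k + 1) = b; omega
    have e3 : 2 * (k + 1) = 2 * k + 1 + 1 := by ring
    rw [e1, e2, e3]
    exact pascal_sub n ((d - 1) * (k + 1)) (2 * k + 1) (Or.inl (by omega))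
  rw [Finset.sum_congr rfl hsplit, Finset.sum_add_distrib,
    Finset.sum_range_succ _ (n + 1)]
  have hz : (n + 2 - 2 - (d - 1) * (n + 1 + 1)).choose (2 * (n + 1 + 1)) = 0 := by
    apply Nat.choose_eq_zero_of_lt
    generalize (d - 1) * (n + 1 + 1) = b; omega
  rw [hz]
  have hB : ∑ k ∈ Finset.range (n + 2 - d),
        (n + 2 - d - 1 - (d - 1) * k).choose (2 * k + 1) =
      ∑ k ∈ Finset.range (n + 2), (n - (d - 1) * (k + 1)).choose (2 * k + 1) := by
    have hcong : ∀ k ∈ Finset.range (n + 2 - d),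
        (n + 2 - d - 1 - (d - 1) * k).choose (2 * k + 1) =
        (n - (d - 1) * (k + 1)).choose (2 * k + 1) := by
      intro k _
      congr 1
      rw [Nat.mul_succ]
      generalize (d - 1) * k = b
      omega
    rw [Finset.sum_congr rfl hcong]
    apply Finset.sum_subset (Finset.range_subset_range.mpr (by omega))
    intro k hk hk'
    simp only [Finset.mem_range, not_lt] at hk hk'
    apply Nat.choose_eq_zero_of_lt
    have hb : d - 1 ≤ (d - 1) * (k + 1) := Nat.le_mul_of_pos_right _ (by omega)
    generalize (d - 1) * (k + 1) = b at hb ⊢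
    omega
  rw [← hB]
  ring

private lemma A1 (d : ℕ) :
    (1 - X) * PowerSeries.mk (fun n => (sfun d n : ℚ)) =
      PowerSeries.mk (fun n => (s1fun d n : ℚ)) + 1 := by
  ext n
  rw [sub_mul, one_mul, map_sub, map_add]
  cases n with
  | zero =>
      simp [sfun, s1fun]
  | succ m =>
      rw [PowerSeries.coeff_succ_X_mul, PowerSeries.coeff_mk, PowerSeries.coeff_mk,
        PowerSeries.coeff_mk, PowerSeries.coeff_one]
      simp only [Nat.succ_ne_zero, if_false]
      rw [L1 d m]
      push_cast
      ring

private lemma A2 (d : ℕ) :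
    (1 - X) * PowerSeries.mk (fun n => (s1fun d n : ℚ)) =
      PowerSeries.mk (fun n => (s2fun d n : ℚ)) - X := by
  ext n
  rw [sub_mul, one_mul, map_sub, map_sub]
  match n with
  | 0 => simp [s1fun, s2fun]
  | 1 =>
      rw [PowerSeries.coeff_succ_X_mul]
      simp [s1fun, s2fun]
  | (n + 2) =>
      rw [PowerSeries.coeff_succ_X_mul, PowerSeries.coeff_mk, PowerSeries.coeff_mk,
        PowerSeries.coeff_mk, PowerSeries.coeff_X]
      rw [if_neg (by omega)]
      rw [L2 d n]
      push_cast
      ring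

private lemma A3 (d : ℕ) (hd : 1 ≤ d) :
    (1 - X) * PowerSeries.mk (fun n => (s2fun d n : ℚ)) =
      PowerSeries.mk (fun n => (s1fun d n : ℚ)) * X ^ (d + 1) + X := by
  ext n
  rw [sub_mul, one_mul, map_sub, map_add, PowerSeries.coeff_mul_X_pow']
  match n with
  | 0 =>
      simp [s2fun, show ¬ (d + 1 ≤ 0) by omega]
  | 1 =>
      rw [PowerSeries.coeff_succ_X_mul]
      simp [s2fun, show ¬ (d + 1 ≤ 1) by omega, Finset.sum_range_one]
  | 2 =>
      rw [PowerSeries.coeff_succ_X_mul]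
      have h2 : s2fun d 2 = 1 := by
        simp [s2fun, Finset.sum_range_succ]
      have h1 : s2fun d 1 = 1 := by
        simp [s2fun]
      rw [PowerSeries.coeff_mk, PowerSeries.coeff_mk, h1, h2]
      split_ifs with h
      · have : (2 : ℕ) - (d + 1) = 0 := by omega
        rw [this, PowerSeries.coeff_mk]
        simp [s1fun, PowerSeries.coeff_X]
      · simp [PowerSeries.coeff_X]
  | (n + 3) =>
      rw [PowerSeries.coeff_succ_X_mul, PowerSeries.coeff_mk, PowerSeries.coeff_mk,
        PowerSeries.coeff_X]
      rw [if_neg (show ¬(n + 3 = 1) by omega)]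
      rw [L3 d n hd]
      split_ifs with h
      · have e : n + 3 - (d + 1) = n + 2 - d := by omega
        rw [e, PowerSeries.coeff_mk]
        push_cast
        ring
      · have e : n + 2 - d = 0 := by omega
        rw [e]
        simp [s1fun]

private lemma trim (d n : ℕ) (hd : 1 ≤ d) (hn : 1 ≤ n) :
    sfun d n = ∑ k ∈ Finset.range ((n + d - 2) / d + 1),
      Nat.choose (n + (d - 1) - (d - 1) * k) (2 * k) := by
  unfold sfun
  symm
  have hq : (n + d - 2) / d ≤ n := by
    rw [Nat.div_le_iff_le_mul_add_pred (by omega)]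
    have : n ≤ d * n := Nat.le_mul_of_pos_left n (by omega)
    omega
  apply Finset.sum_subset (Finset.range_subset_range.mpr (by omega))
  intro k hk hk'
  simp only [Finset.mem_range, not_lt] at hk hk'
  apply Nat.choose_eq_zero_of_lt
  have hk1 : 1 ≤ k := le_trans (Nat.le_add_left 1 _) hk'
  have hK : n + d - 2 < k * d :=
    (Nat.div_lt_iff_lt_mul (show 0 < d by omega)).mp (Nat.lt_of_succ_le hk')
  rw [Nat.mul_comm] at hK
  have h4 : (d - 1) * k + k = d * k := by
    rw [Nat.sub_one_mul]
    exact Nat.sub_add_cancel (Nat.le_mul_of_pos_left k (by omega))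
  obtain ⟨B, hB⟩ : ∃ B, (d - 1) * k = B := ⟨_, rfl⟩
  obtain ⟨K, hKe⟩ : ∃ K, d * k = K := ⟨_, rfl⟩
  rw [hB, hKe] at h4
  rw [hKe] at hK
  rw [hB]
  omega

/-- For `d ≥ 1` and `n ≥ 1`, the coefficient of `x^n` in the power series
`V_d(x) = (1−2x+2x²−x^{d+1})/((1−x)(1−2x+x²−x^{d+1}))` equals
`∑_{k=0}^{⌊(n+d−2)/d⌋} C(n−(d−1)(k−1), 2k)`. -/
theorem vd_coeff_eq (d n : ℕ) (hd : 1 ≤ d) (hn : 1 ≤ n) :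
    PowerSeries.coeff (R := ℚ) n
        ((1 - 2 * X + 2 * X ^ 2 - X ^ (d + 1)) *
          ((1 - X) * (1 - 2 * X + X ^ 2 - X ^ (d + 1)))⁻¹) =
      ∑ k ∈ Finset.range ((n + d - 2) / d + 1),
        (Nat.choose (n + (d - 1) - (d - 1) * k) (2 * k) : ℚ) := by
  have hA1 := A1 d
  have hA2 := A2 d
  have hA3 := A3 d hd
  have hB : PowerSeries.constantCoeff (R := ℚ) ((1 - X) * (1 - 2 * X + X ^ 2 - X ^ (d + 1))) ≠ 0 := by
    simp [zero_pow]
  have key : (1 - 2 * X + 2 * X ^ 2 - X ^ (d + 1) : ℚ⟦X⟧)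
      = PowerSeries.mk (fun n => (sfun d n : ℚ)) *
        ((1 - X) * (1 - 2 * X + X ^ 2 - X ^ (d + 1))) := by
    linear_combination (X ^ (d + 1) - (1 - X) ^ 2) * hA1 - (1 - X) * hA2 - hA3
  rw [key, mul_assoc, PowerSeries.mul_inv_cancel _ hB, mul_one, PowerSeries.coeff_mk,
    trim d n hd hn]
  push_cast
  ring
end

section
/- For d ≥ 1, the number of d-Dyck paths of semi-length n with exactly k valleys (k ≥ 1) is at most C(n−(d−1)(k−1), 2k); in particular the total count is bounded by the sum ∑_{k=0}^{⌊(n+d−2)/d⌋} C(n−(d−1)(k−1), 2k), and a d-Dyck path of semi-length n has at most ⌊(n+d−2)/d⌋ valleys. -/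
/-- A Dyck word: `true` is an up-step `U`, `false` is a down-step `D`.
Every prefix has at least as many `U`'s as `D`'s, and the whole word is balanced. -/
def IsDyckWord (l : List Bool) : Prop :=
  l.count true = l.count false ∧
  ∀ k, (l.take k).count false ≤ (l.take k).count true

/-- The height (y-coordinate) of the path after the first `k` steps. -/
def pathHeight (l : List Bool) (k : ℕ) : ℤ :=
  ((l.take k).count true : ℤ) - ((l.take k).count false : ℤ)

/-- The y-coordinates of the valley vertices (occurrences of the factor `DU`),
listed from left to right. -/
def valleyHeights (l : List Bool) : List ℤ :=
  (List.range l.length).filterMap fun i =>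
    if l[i]? = some false ∧ l[i+1]? = some true
    then some (pathHeight l (i+1)) else none

/-- A `d`-Dyck word: a Dyck word whose consecutive valley heights increase by at
least `d` (this is vacuous when there is at most one valley). -/
def IsDDyck (d : ℕ) (l : List Bool) : Prop :=
  IsDyckWord l ∧
  ∀ (i : ℕ) (a b : ℤ), (valleyHeights l)[i]? = some a → (valleyHeights l)[i+1]? = some b →
    a + (d : ℤ) ≤ b

namespace DDyck

/-- valley data: pairs (count of U's, count of D's) at each valley. -/
def vp (l : List Bool) : List (ℕ × ℕ) :=
  (List.range l.length).filterMap fun i =>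
    if l[i]? = some false ∧ l[i+1]? = some true
    then some ((l.take (i+1)).count true, (l.take (i+1)).count false) else none

def shift (a : Bool) : ℕ × ℕ → ℕ × ℕ := fun p => if a then (p.1+1, p.2) else (p.1, p.2+1)

lemma vp_tail (a : Bool) (xs : List Bool) :
    (List.filterMap ((fun i =>
        if (a :: xs)[i]? = some false ∧ (a :: xs)[i+1]? = some true
        then some (((a :: xs).take (i+1)).count true, ((a :: xs).take (i+1)).count false)
        else none) ∘ Nat.succ) (List.range xs.length)) = (vp xs).map (shift a) := by
  unfold vp
  rw [List.map_filterMap]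
  apply List.filterMap_congr
  intro i _
  simp only [Function.comp, Nat.succ_eq_add_one, List.getElem?_cons_succ]
  by_cases h : xs[i]? = some false ∧ xs[i+1]? = some true
  · simp only [if_pos h, Option.map_some]
    congr 1
    have : (a :: xs).take (i+1+1) = a :: xs.take (i+1) := rfl
    rw [this]
    cases a <;> simp [shift, List.count_cons]
  · simp [h]

lemma vp_cons (a : Bool) (xs : List Bool) :
    vp (a :: xs) = (if a = false ∧ xs[0]? = some true then [(0,1)] else [])
      ++ (vp xs).map (shift a) := by
  have htail := vp_tail a xs
  unfold vp
  rw [List.length_cons, List.range_succ_eq_map]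
  rw [show ∀ f : ℕ → Option (ℕ × ℕ), ∀ g l, List.filterMap f (0 :: List.map g l)
      = List.filterMap f [0] ++ List.filterMap (f ∘ g) l from fun f g l => by
    rw [show (0 :: List.map g l) = [0] ++ List.map g l from rfl, List.filterMap_append,
      List.filterMap_map]]
  rw [htail]
  congr 1
  by_cases h : a = false ∧ xs[0]? = some true
  · rw [if_pos h]
    obtain ⟨h1, h2⟩ := h
    subst h1
    simp [List.filterMap, h2]
  · rw [if_neg h]
    simp only [List.filterMap]
    rw [if_neg (by simpa using fun h1 h2 => absurd ⟨h1, h2⟩ h)]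

lemma count_tf (l : List Bool) : l.count true + l.count false = l.length := by
  induction l with
  | nil => simp
  | cons a xs ih => cases a <;> simp [List.count_cons] <;> omega

lemma vp_sum_pos : ∀ (l : List Bool), ∀ p ∈ vp l, 1 ≤ p.1 + p.2 := by
  intro l
  induction l with
  | nil => simp [vp]
  | cons a xs ih =>
    intro p hp
    rw [vp_cons] at hp
    rcases List.mem_append.1 hp with h | h
    · split_ifs at h with hc
      · simp at h; simp [h]
      · simp at h
    · obtain ⟨q, hq, rfl⟩ := List.mem_map.1 h
      have := ih q hq
      cases a <;> simp [shift] <;> omega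

lemma vp_fst_pos (xs : List Bool) : ∀ p ∈ vp (true :: xs), 1 ≤ p.1 := by
  intro p hp
  rw [vp_cons] at hp
  simp only [if_neg (by simp : ¬(true = false ∧ xs[0]? = some true)), List.nil_append] at hp
  obtain ⟨q, hq, rfl⟩ := List.mem_map.1 hp
  simp [shift]

lemma vp_exists_zero : ∀ (xs : List Bool), 1 ≤ xs.count true →
    ∃ w, (0, w) ∈ vp (false :: xs) := by
  intro xs
  induction xs with
  | nil => simp
  | cons b ys ih =>
    intro hc
    rw [vp_cons]
    by_cases hb : b = true
    · subst hb
      exact ⟨1, by simp⟩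
    · have hb' : b = false := by cases b <;> simp_all
      subst hb'
      simp only [List.count_cons] at hc
      obtain ⟨w, hw⟩ := ih (by simpa using hc)
      refine ⟨w + 1, ?_⟩
      apply List.mem_append.2
      right
      apply List.mem_map.2
      exact ⟨(0, w), hw, by simp [shift]⟩

lemma vp_nil_eq : ∀ (l : List Bool), vp l = [] →
    l = List.replicate (l.count true) true ++ List.replicate (l.count false) false := by
  intro l
  induction l with
  | nil => simp
  | cons a xs ih =>
    intro h
    rw [vp_cons] at h
    have h2 : vp xs = [] := by
      rcases List.append_eq_nil_iff.1 h with ⟨-, h2⟩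
      exact List.map_eq_nil_iff.1 h2
    have h1 : ¬(a = false ∧ xs[0]? = some true) := by
      intro hc
      rw [if_pos hc] at h
      simp at h
    have hxs := ih h2
    cases a with
    | true =>
      rw [List.count_cons, List.count_cons]
      simp only [show ((true : Bool) == true) = true from rfl, show ((false:Bool) == true) = false from rfl]
      simp only [if_true]
      conv_lhs => rw [hxs]
      simp [List.replicate_succ]
    | false =>
      have hx0 : xs.count true = 0 := by
        by_contra hne
        have : xs ≠ [] := by intro he; simp [he] at hne
        obtain ⟨b, ys, rfl⟩ := List.exists_cons_of_ne_nil this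
        cases b with
        | true => exact h1 ⟨rfl, by simp⟩
        | false =>
          -- xs = false :: ys, count true xs ≥ 1 ⇒ vp xs ≠ []
          have hc : 1 ≤ ys.count true := by
            simp [List.count_cons] at hne
            omega
          obtain ⟨w, hw⟩ := vp_exists_zero ys hc
          rw [h2] at hw
          simp at hw
      rw [List.count_cons, List.count_cons]
      simp only [show ((true : Bool) == false) = false from rfl, show ((false:Bool) == false) = true from rfl]
      simp only [if_true, if_false]
      conv_lhs => rw [hxs]
      rw [hx0]
      simp [List.replicate_succ]

lemma shift_inj (a : Bool) : Function.Injective (shift a) := by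
  intro p q h
  cases a <;> simp [shift, Prod.ext_iff] at h ⊢ <;> omega

lemma len_zero_of_counts (l : List Bool) (h1 : l.count true = 0) (h2 : l.count false = 0) :
    l = [] := by
  have := count_tf l
  have : l.length = 0 := by omega
  exact List.length_eq_zero_iff.1 this

lemma vp_inj : ∀ (l l' : List Bool), vp l = vp l' → l.count true = l'.count true →
    l.count false = l'.count false → l = l' := by
  intro l
  induction l with
  | nil =>
    intro l' _ h1 h2
    simp at h1 h2
    exact (len_zero_of_counts l' h1.symm h2.symm).symm
  | cons a xs ih =>
    intro l' hv h1 h2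
    cases l' with
    | nil =>
      exfalso
      simp at h1 h2
      have := count_tf (a :: xs)
      simp [h1, h2] at this
    | cons a' xs' =>
      have haa : a = a' := by
        by_contra hne
        have key : ∀ (ys ys' : List Bool), vp (true :: ys) = vp (false :: ys') →
            (true :: ys).count true = (false :: ys').count true → False := by
          intro ys ys' hvv hcc
          have hct : 1 ≤ ys'.count true := by
            simp [List.count_cons] at hcc; omega
          obtain ⟨w, hw⟩ := vp_exists_zero ys' hct
          rw [← hvv] at hw
          have := vp_fst_pos ys (0, w) hw
          simp at this
        cases a <;> cases a' <;> simp at hne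
        · exact key xs' xs hv.symm h1.symm
        · exact key xs xs' hv h1
      subst haa
      rw [vp_cons, vp_cons] at hv
      have hxs : vp xs = vp xs' ∧
          ((a = false ∧ xs[0]? = some true) ↔ (a = false ∧ xs'[0]? = some true)) := by
        by_cases hc : a = false ∧ xs[0]? = some true <;>
          by_cases hc' : a = false ∧ xs'[0]? = some true
        · rw [if_pos hc, if_pos hc'] at hv
          simp only [List.singleton_append] at hv
          exact ⟨List.map_injective_iff.2 (shift_inj a) (List.cons_injective.eq_iff.1 hv),
            by tauto⟩
        · exfalso
          rw [if_pos hc, if_neg hc'] at hv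
          simp only [List.nil_append, List.singleton_append] at hv
          have hmem : ((0:ℕ),(1:ℕ)) ∈ (vp xs').map (shift a) := by
            rw [← hv]; simp
          obtain ⟨q, hq, hqe⟩ := List.mem_map.1 hmem
          have hsum := vp_sum_pos xs' q hq
          rcases hc with ⟨rfl, -⟩
          simp [shift, Prod.ext_iff] at hqe
          omega
        · exfalso
          rw [if_neg hc, if_pos hc'] at hv
          simp only [List.nil_append, List.singleton_append] at hv
          have hmem : ((0:ℕ),(1:ℕ)) ∈ (vp xs).map (shift a) := by
            rw [hv]; simp
          obtain ⟨q, hq, hqe⟩ := List.mem_map.1 hmem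
          have hsum := vp_sum_pos xs q hq
          rcases hc' with ⟨rfl, -⟩
          simp [shift, Prod.ext_iff] at hqe
          omega
        · rw [if_neg hc, if_neg hc'] at hv
          simp only [List.nil_append] at hv
          exact ⟨List.map_injective_iff.2 (shift_inj a) hv, by tauto⟩
      have h1' : xs.count true = xs'.count true := by
        simp [List.count_cons] at h1; cases a <;> simp_all
      have h2' : xs.count false = xs'.count false := by
        simp [List.count_cons] at h2; cases a <;> simp_all
      rw [ih xs' hxs.1 h1' h2']

def vi (l : List Bool) : List ℕ :=
  (List.range l.length).filter (fun i => decide (l[i]? = some false ∧ l[i+1]? = some true))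

lemma filterMap_if {α β : Type*} (p : α → Prop) [DecidablePred p] (f : α → β) :
    ∀ l : List α, (l.filterMap fun x => if p x then some (f x) else none)
      = (l.filter fun x => decide (p x)).map f := by
  intro l
  induction l with
  | nil => rfl
  | cons a t ih => by_cases h : p a <;> simp [List.filterMap_cons, List.filter_cons, h, ih]

lemma vp_eq (l : List Bool) :
    vp l = (vi l).map (fun i => ((l.take (i+1)).count true, (l.take (i+1)).count false)) :=
  filterMap_if (fun i => l[i]? = some false ∧ l[i+1]? = some true) _ _

lemma vh_eq (l : List Bool) : valleyHeights l = (vp l).map (fun p => (p.1:ℤ) - p.2) := by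
  unfold valleyHeights vp
  rw [List.map_filterMap]
  apply List.filterMap_congr
  intro i _
  by_cases h : l[i]? = some false ∧ l[i+1]? = some true <;> simp [h, pathHeight]

lemma vi_pairwise (l : List Bool) : (vi l).Pairwise (· < ·) :=
  List.pairwise_lt_range.filter _

lemma vi_mem (l : List Bool) : ∀ i ∈ vi l,
    i + 1 < l.length ∧ l[i]? = some false ∧ l[i+1]? = some true := by
  intro i hi
  rw [vi, List.mem_filter, List.mem_range] at hi
  have h := of_decide_eq_true hi.2
  refine ⟨?_, h.1, h.2⟩
  have := h.2
  rw [List.getElem?_eq_some_iff] at this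
  exact this.choose

lemma vi_length (l : List Bool) : (vi l).length = (vp l).length := by
  rw [vp_eq, List.length_map]

lemma count_take_mono (l : List Bool) (x : Bool) {a b : ℕ} (h : a ≤ b) :
    (l.take a).count x ≤ (l.take b).count x := by
  have : l.take a = (l.take b).take a := by rw [List.take_take, min_eq_left h]
  rw [this]
  exact (List.take_sublist _ _).count_le x

lemma count_take_succ_of_eq (l : List Bool) (x : Bool) (i : ℕ) (h : l[i]? = some x) :
    (l.take (i+1)).count x = (l.take i).count x + 1 := by
  rw [List.take_succ, h, List.count_append]
  simp

lemma count_take_le (l : List Bool) (x : Bool) (a : ℕ) : (l.take a).count x ≤ l.count x :=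
  (List.take_sublist _ _).count_le x

def U (l : List Bool) (j : ℕ) : ℕ := ((vp l).getD j (0,0)).1
def W (l : List Bool) (j : ℕ) : ℕ := ((vp l).getD j (0,0)).2

lemma spec (l : List Bool) (j : ℕ) (hj : j < (vp l).length) :
    (vi l).getD j 0 + 1 < l.length ∧ l[(vi l).getD j 0]? = some false ∧
    l[(vi l).getD j 0 + 1]? = some true ∧
    U l j = (l.take ((vi l).getD j 0 + 1)).count true ∧
    W l j = (l.take ((vi l).getD j 0 + 1)).count false := by
  have hj' : j < (vi l).length := by rw [vi_length]; exact hj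
  have hmem : (vi l).getD j 0 ∈ vi l := by
    rw [List.getD_eq_getElem _ _ hj']
    exact List.getElem_mem _
  obtain ⟨h1, h2, h3⟩ := vi_mem l _ hmem
  refine ⟨h1, h2, h3, ?_, ?_⟩ <;>
  · simp only [U, W]
    rw [vp_eq, List.getD_eq_getElem _ _ (by rwa [List.length_map]),
      List.getElem_map, List.getD_eq_getElem _ _ hj']

lemma vi_mono (l : List Bool) {j j' : ℕ} (h : j < j') (hj' : j' < (vp l).length) :
    (vi l).getD j 0 < (vi l).getD j' 0 := by
  have hj2 : j' < (vi l).length := by rw [vi_length]; exact hj'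
  have hj1 : j < (vi l).length := lt_trans h hj2
  rw [List.getD_eq_getElem _ _ hj1, List.getD_eq_getElem _ _ hj2]
  exact List.pairwise_iff_getElem.1 (vi_pairwise l) _ _ _ _ h

lemma fact_W1 {l : List Bool} (hD : IsDyckWord l) :
    ∀ j < (vp l).length, 1 ≤ W l j ∧ W l j ≤ U l j := by
  intro j hj
  obtain ⟨h1, h2, h3, h4, h5⟩ := spec l j hj
  constructor
  · rw [h5, count_take_succ_of_eq l false _ h2]; omega
  · rw [h4, h5]; exact hD.2 _

lemma fact_step {l : List Bool} :
    ∀ j, j + 1 < (vp l).length → U l j + 1 ≤ U l (j+1) ∧ W l j + 1 ≤ W l (j+1) := by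
  intro j hj
  obtain ⟨h1, h2, h3, h4, h5⟩ := spec l j (lt_trans (Nat.lt_succ_self j) hj)
  obtain ⟨g1, g2, g3, g4, g5⟩ := spec l (j+1) hj
  have hlt : (vi l).getD j 0 < (vi l).getD (j+1) 0 := vi_mono l (Nat.lt_succ_self j) hj
  constructor
  · rw [h4, g4]
    calc (l.take ((vi l).getD j 0 + 1)).count true + 1
        = (l.take ((vi l).getD j 0 + 1 + 1)).count true := by
          rw [count_take_succ_of_eq l true _ h3]
      _ ≤ _ := count_take_mono l true (by omega)
  · rw [h5, g5]
    calc (l.take ((vi l).getD j 0 + 1)).count false + 1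
        ≤ (l.take ((vi l).getD (j+1) 0)).count false + 1 := by
          have := count_take_mono l false (show (vi l).getD j 0 + 1 ≤ (vi l).getD (j+1) 0 by omega)
          omega
      _ = _ := (count_take_succ_of_eq l false _ g2).symm

lemma fact_d {d : ℕ} {l : List Bool} (hD : IsDDyck d l) :
    ∀ j, j + 1 < (vp l).length →
      (U l j : ℤ) - W l j + d ≤ (U l (j+1) : ℤ) - W l (j+1) := by
  intro j hj
  have h1 : (valleyHeights l)[j]? = some ((U l j : ℤ) - W l j) := by
    rw [vh_eq, List.getElem?_map, List.getElem?_eq_getElem (by exact lt_trans (Nat.lt_succ_self j) hj)]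
    simp only [Option.map_some]
    congr 1
    unfold U W
    rw [List.getD_eq_getElem _ _ (lt_trans (Nat.lt_succ_self j) hj)]
  have h2 : (valleyHeights l)[j+1]? = some ((U l (j+1) : ℤ) - W l (j+1)) := by
    rw [vh_eq, List.getElem?_map, List.getElem?_eq_getElem hj]
    simp only [Option.map_some]
    congr 1
    unfold U W
    rw [List.getD_eq_getElem _ _ hj]
  have := hD.2 j _ _ h1 h2
  linarith

lemma fact_last {n : ℕ} {l : List Bool} (hl : l.length = 2*n) (hD : IsDyckWord l)
    (hk : 1 ≤ (vp l).length) :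
    U l ((vp l).length - 1) + 1 ≤ n ∧ W l ((vp l).length - 1) + 1 ≤ n := by
  obtain ⟨h1, h2, h3, h4, h5⟩ := spec l _ (Nat.sub_lt hk Nat.one_pos)
  have hct : l.count true = n := by have := count_tf l; have := hD.1; omega
  have hcf : l.count false = n := by have := count_tf l; have := hD.1; omega
  have hn1 : 1 ≤ n := by omega
  have hlast : l[2*n-1]? = some false := by
    have hlt : 2*n-1 < l.length := by omega
    rw [List.getElem?_eq_getElem hlt]
    by_contra hne
    have htr : l[2*n-1] = true := by
      cases hx : l[2*n-1] <;> simp [hx] at hne ⊢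
    have htake : l.take (2*n-1+1) = l := by
      rw [show 2*n-1+1 = l.length by omega, List.take_length]
    have h6 : (l.take (2*n-1+1)).count true = (l.take (2*n-1)).count true + 1 :=
      count_take_succ_of_eq l true _ (by rw [List.getElem?_eq_getElem hlt, htr])
    rw [htake] at h6
    have h7 := hD.2 (2*n-1)
    have h8 : (l.take (2*n-1)).count false ≤ (l.take (2*n-1)).count true := h7
    have h9 : (l.take (2*n-1)).count false + ((l.drop (2*n-1)).count false) = n := by
      rw [← List.count_append, List.take_append_drop, hcf]
    have h10 : (l.drop (2*n-1)).count false = 0 := by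
      have : l.drop (2*n-1) = [l[2*n-1]] := by
        rw [List.drop_eq_getElem_cons hlt]
        congr 1
        apply List.drop_eq_nil_of_le
        omega
      rw [this, htr]
      simp
    omega
  constructor
  · rw [h4]
    have h6 : (l.take ((vi l).getD ((vp l).length - 1) 0 + 1 + 1)).count true
        = (l.take ((vi l).getD ((vp l).length - 1) 0 + 1)).count true + 1 :=
      count_take_succ_of_eq l true _ h3
    have h7 := count_take_le l true ((vi l).getD ((vp l).length - 1) 0 + 1 + 1)
    omega
  · rw [h5]
    have h6 : (l.take (2*n-1+1)).count false = (l.take (2*n-1)).count false + 1 :=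
      count_take_succ_of_eq l false _ hlast
    have htake : l.take (2*n-1+1) = l := by
      rw [show 2*n-1+1 = l.length by omega, List.take_length]
    rw [htake, hcf] at h6
    have h7 : (l.take ((vi l).getD ((vp l).length - 1) 0 + 1)).count false
        ≤ (l.take (2*n-1)).count false := count_take_mono l false (by omega)
    omega

lemma fact_dchain {d : ℕ} {l : List Bool} (hDD : IsDDyck d l) :
    ∀ j < (vp l).length, (d:ℤ)*j + W l j ≤ U l j := by
  intro j
  induction j with
  | zero =>
    intro hj
    have := (fact_W1 hDD.1 0 hj).2
    push_cast
    omega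
  | succ j ih =>
    intro hj
    have h1 := ih (lt_trans (Nat.lt_succ_self j) hj)
    have h2 := fact_d hDD j hj
    push_cast
    push_cast at h1 h2
    linarith

lemma fact_Wchain {l : List Bool} (hD : IsDyckWord l) :
    ∀ j < (vp l).length, j + 1 ≤ W l j := by
  intro j
  induction j with
  | zero => intro hj; exact (fact_W1 hD 0 hj).1
  | succ j ih =>
    intro hj
    have h1 := ih (lt_trans (Nat.lt_succ_self j) hj)
    have h2 := (fact_step j hj).2
    omega

/-- the encoding function -/
def enc (d : ℕ) (l : List Bool) (r : ℕ) : ℤ :=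
  if r % 2 = 0 then
    (W l (r/2) : ℤ) +
      (if r/2 = 0 then 0 else (U l (r/2 - 1) : ℤ) - (d:ℤ)*((r/2 - 1 : ℕ) : ℤ) - (W l (r/2 - 1) : ℤ))
      + ((r/2 : ℕ) : ℤ)
  else (U l (r/2) : ℤ) - (d:ℤ)*((r/2 : ℕ) : ℤ) + ((r/2 : ℕ) : ℤ) + 1

lemma enc_succ_lt {d n : ℕ} {l : List Bool} (hl : l.length = 2*n) (hDD : IsDDyck d l) :
    ∀ r, r + 1 < 2 * (vp l).length → enc d l r < enc d l (r+1) := by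
  intro r hr
  rcases Nat.even_or_odd r with ⟨j, hj⟩ | ⟨j, hj⟩
  · subst hj
    have hj1 : j < (vp l).length := by omega
    have heven : (j + j) % 2 = 0 := by omega
    have hodd : (j + j + 1) % 2 = 1 := by omega
    have hd1 : (j + j) / 2 = j := by omega
    have hd2 : (j + j + 1) / 2 = j := by omega
    rw [enc, enc, if_pos heven, if_neg (show ¬((j+j+1) % 2 = 0) by omega), hd1, hd2]
    rcases Nat.eq_zero_or_pos j with rfl | hjpos
    · have := fact_dchain hDD 0 hj1
      simp only [if_pos rfl]
      simp at this ⊢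
      omega
    · rw [if_neg (show ¬(j = 0) by omega)]
      have h2 := fact_d hDD (j-1) (by omega)
      rw [show j - 1 + 1 = j by omega] at h2
      rw [show ((j-1:ℕ):ℤ) = (j:ℤ)-1 by omega]
      linarith [h2]
  · subst hj
    have hj1 : j + 1 < (vp l).length := by omega
    have h1 : (2*j+1) % 2 = 1 := by omega
    have h2 : (2*j+1+1) % 2 = 0 := by omega
    have hd1 : (2*j+1) / 2 = j := by omega
    have hd2 : (2*j+1+1) / 2 = j + 1 := by omega
    rw [enc, enc, if_neg (show ¬((2*j+1) % 2 = 0) by omega), if_pos h2, hd1, hd2, if_neg (show ¬(j+1 = 0) by omega)]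
    have hstep := (fact_step j hj1).2
    have hstep' : ((W l j : ℤ)) + 1 ≤ (W l (j+1) : ℤ) := by exact_mod_cast hstep
    simp only [Nat.add_sub_cancel]
    push_cast
    linarith

lemma enc_lt {d n : ℕ} {l : List Bool} (hl : l.length = 2*n) (hDD : IsDDyck d l) :
    ∀ r r', r < r' → r' < 2 * (vp l).length → enc d l r < enc d l r' := by
  intro r r' hlt hr'
  induction r' with
  | zero => omega
  | succ r'' ih =>
    rcases Nat.lt_or_ge r r'' with h | h
    · exact lt_trans (ih h (by omega)) (enc_succ_lt hl hDD r'' hr')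
    · have : r = r'' := by omega
      subst this
      exact enc_succ_lt hl hDD r hr'

lemma enc_gap {d n : ℕ} {l : List Bool} (hl : l.length = 2*n) (hDD : IsDDyck d l) :
    ∀ r r', r ≤ r' → r' < 2 * (vp l).length →
      enc d l r + ((r' : ℤ) - r) ≤ enc d l r' := by
  intro r r' hle hr'
  induction r' with
  | zero => have : r = 0 := by omega
            subst this; simp
  | succ r'' ih =>
    rcases Nat.lt_or_ge r (r''+1) with h | h
    · have h1 := ih (by omega) (by omega)
      have h2 := enc_succ_lt hl hDD r'' hr'
      push_cast
      push_cast at h1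
      omega
    · have : r = r'' + 1 := by omega
      subst this; simp

lemma enc_lb {d n : ℕ} {l : List Bool} (hl : l.length = 2*n) (hDD : IsDDyck d l) :
    ∀ r < 2 * (vp l).length, 1 + (r:ℤ) ≤ enc d l r := by
  intro r hr
  have h0 : enc d l 0 = (W l 0 : ℤ) := by
    rw [enc, if_pos (by omega)]
    simp
  have hW := fact_Wchain hDD.1 0 (by omega)
  have := enc_gap hl hDD 0 r (by omega) hr
  rw [h0] at this
  push_cast at this ⊢
  omega

lemma enc_ub {d n : ℕ} {l : List Bool} (hl : l.length = 2*n) (hDD : IsDDyck d l)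
    (hd : 1 ≤ d) :
    ∀ r < 2 * (vp l).length,
      enc d l r ≤ (n : ℤ) + (d - 1) - (d - 1) * (vp l).length := by
  intro r hr
  set k := (vp l).length with hk
  have hk1 : 1 ≤ k := by omega
  have hlast : enc d l (2*k - 1) = (U l (k-1) : ℤ) - d*(k-1) + (k-1) + 1 := by
    rw [enc, if_neg (by omega), show (2*k-1)/2 = k - 1 by omega]
    push_cast [hk1]
    ring
  have hU := (fact_last hl hDD.1 hk1).1
  have hle : enc d l r ≤ enc d l (2*k-1) := by
    rcases Nat.lt_or_ge r (2*k-1) with h | h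
    · exact le_of_lt (enc_lt hl hDD r (2*k-1) h (by omega))
    · have : r = 2*k-1 := by omega
      rw [this]
  rw [hlast] at hle
  rw [← hk] at hU
  have hU' : (U l (k-1) : ℤ) + 1 ≤ n := by exact_mod_cast hU
  linarith

lemma enc_odd (d : ℕ) (l : List Bool) (j : ℕ) :
    enc d l (2*j+1) = (U l j : ℤ) - (d:ℤ)*(j:ℤ) + (j:ℤ) + 1 := by
  rw [enc, if_neg (show ¬((2*j+1) % 2 = 0) by omega), show (2*j+1)/2 = j by omega]

lemma enc_even (d : ℕ) (l : List Bool) (j : ℕ) :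
    enc d l (2*j) = (W l j : ℤ) +
      (if j = 0 then 0 else (U l (j-1) : ℤ) - (d:ℤ)*((j - 1 : ℕ) : ℤ) - (W l (j-1) : ℤ))
      + (j:ℤ) := by
  rw [enc, if_pos (show (2*j) % 2 = 0 by omega), show (2*j)/2 = j by omega]

lemma counts_n {n : ℕ} {l : List Bool} (hl : l.length = 2*n) (hD : IsDyckWord l) :
    l.count true = n ∧ l.count false = n := by
  have := count_tf l
  have := hD.1
  omega

lemma vh_length (l : List Bool) : (valleyHeights l).length = (vp l).length := by
  rw [vh_eq, List.length_map]

lemma recover {d n : ℕ} {l l' : List Bool} (hl : l.length = 2*n) (hl' : l'.length = 2*n)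
    (hkk : (vp l).length = (vp l').length)
    (henc : ∀ r < 2*(vp l).length, enc d l r = enc d l' r) : vp l = vp l' := by
  have key : ∀ j, j < (vp l).length → U l j = U l' j ∧ W l j = W l' j := by
    intro j
    induction j with
    | zero =>
      intro hj
      constructor
      · have h := henc 1 (by omega)
        rw [show (1:ℕ) = 2*0+1 by omega, enc_odd, enc_odd] at h
        have : (U l 0 : ℤ) = U l' 0 := by push_cast at h; linarith
        exact_mod_cast this
      · have h := henc 0 (by omega)
        rw [show (0:ℕ) = 2*0 by omega, enc_even, enc_even, if_pos rfl, if_pos rfl] at h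
        have : (W l 0 : ℤ) = W l' 0 := by push_cast at h; linarith
        exact_mod_cast this
    | succ j ih =>
      intro hj
      obtain ⟨hU, hW⟩ := ih (by omega)
      constructor
      · have h := henc (2*(j+1)+1) (by omega)
        rw [enc_odd, enc_odd] at h
        have : (U l (j+1) : ℤ) = U l' (j+1) := by linarith
        exact_mod_cast this
      · have h := henc (2*(j+1)) (by omega)
        rw [enc_even, enc_even, if_neg (show ¬(j+1 = 0) by omega),
          if_neg (show ¬(j+1 = 0) by omega), Nat.add_sub_cancel] at h
        rw [hU, hW] at h
        have : (W l (j+1) : ℤ) = W l' (j+1) := by linarith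
        exact_mod_cast this
  apply List.ext_getElem hkk
  intro j h1 h2
  have hUW := key j h1
  have e1 : (vp l)[j] = (vp l).getD j (0,0) := (List.getD_eq_getElem _ _ h1).symm
  have e2 : (vp l')[j] = (vp l').getD j (0,0) := (List.getD_eq_getElem _ _ h2).symm
  rw [e1, e2]
  have := hUW.1
  have := hUW.2
  unfold U W at *
  exact Prod.ext (by omega) (by omega)

lemma bound_k (d n kk : ℕ) (hd : 1 ≤ d) (hk : 1 ≤ kk) :
    Set.ncard {l : List Bool | l.length = 2 * n ∧ IsDDyck d l ∧
        (valleyHeights l).length = kk} ≤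
      Nat.choose (n + (d - 1) - (d - 1) * kk) (2 * kk) := by
  set S := {l : List Bool | l.length = 2 * n ∧ IsDDyck d l ∧
      (valleyHeights l).length = kk} with hS
  rcases S.eq_empty_or_nonempty with he | ⟨l₀, hl₀⟩
  · simp [he]
  set m : ℤ := (n:ℤ) + ((d:ℤ) - 1) - ((d:ℤ)-1)*(kk:ℤ) with hm
  have hSfacts : ∀ l ∈ S, l.length = 2*n ∧ IsDDyck d l ∧ (vp l).length = kk := by
    intro l hl
    obtain ⟨h1, h2, h3⟩ := hl
    exact ⟨h1, h2, by rw [← vh_length]; exact h3⟩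
  have hub : ∀ l ∈ S, ∀ r < 2*kk, enc d l r ≤ m := by
    intro l hl r hr
    obtain ⟨h1, h2, h3⟩ := hSfacts l hl
    have := enc_ub h1 h2 hd r (by omega)
    rwa [h3] at this
  have hlb : ∀ l ∈ S, ∀ r < 2*kk, 1 + (r:ℤ) ≤ enc d l r := by
    intro l hl r hr
    obtain ⟨h1, h2, h3⟩ := hSfacts l hl
    have := enc_lb h1 h2 r (by omega)
    exact this
  have hm2k : 2*(kk:ℤ) ≤ m := by
    have h1 := hlb l₀ hl₀ (2*kk-1) (by omega)
    have h2 := hub l₀ hl₀ (2*kk-1) (by omega)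
    have : ((2*kk-1 : ℕ):ℤ) = 2*(kk:ℤ) - 1 := by push_cast [hk]; omega
    rw [this] at h1
    linarith
  have hmnat : ((n + (d - 1) - (d - 1) * kk : ℕ) : ℤ) = m := by
    have hcast : m = ((n + (d-1) : ℕ) : ℤ) - (((d-1)*kk : ℕ) : ℤ) := by
      push_cast [hd]
      ring
    omega
  set T : Finset (Finset ℤ) := (Finset.Icc (1:ℤ) m).powersetCard (2*kk) with hT
  set Φ : List Bool → Finset ℤ := fun l => (Finset.range (2*kk)).image (enc d l) with hΦ
  have hinj2 : ∀ l ∈ S, Set.InjOn (enc d l) (Finset.range (2*kk)) := by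
    intro l hl r hr r' hr' he
    obtain ⟨h1, h2, h3⟩ := hSfacts l hl
    simp only [Finset.coe_range, Set.mem_Iio] at hr hr'
    rcases lt_trichotomy r r' with h | h | h
    · exact absurd he (ne_of_lt (enc_lt h1 h2 r r' h (by omega)))
    · exact h
    · exact absurd he.symm (ne_of_lt (enc_lt h1 h2 r' r h (by omega)))
  have hcard : ∀ l ∈ S, (Φ l).card = 2*kk := by
    intro l hl
    rw [hΦ, Finset.card_image_of_injOn (hinj2 l hl), Finset.card_range]
  have hmaps : ∀ l ∈ S, Φ l ∈ (T : Set (Finset ℤ)) := by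
    intro l hl
    simp only [hT, Finset.mem_coe, Finset.mem_powersetCard]
    constructor
    · intro x hx
      simp only [hΦ, Finset.mem_image, Finset.mem_range] at hx
      obtain ⟨r, hr, rfl⟩ := hx
      rw [Finset.mem_Icc]
      constructor
      · have := hlb l hl r hr; omega
      · exact hub l hl r hr
    · exact hcard l hl
  have hSinj : Set.InjOn Φ S := by
    intro l hlS l' hl'S himg
    obtain ⟨h1, h2, h3⟩ := hSfacts l hlS
    obtain ⟨h1', h2', h3'⟩ := hSfacts l' hl'S
    have hc : (Φ l).card = 2*kk := hcard l hlS
    set F : Fin (2*kk) → ℤ := fun i => enc d l i with hF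
    set F' : Fin (2*kk) → ℤ := fun i => enc d l' i with hF'
    have hFmono : StrictMono F := by
      intro i i' hii
      exact enc_lt h1 h2 i i' hii (by have := i'.isLt; omega)
    have hF'mono : StrictMono F' := by
      intro i i' hii
      exact enc_lt h1' h2' i i' hii (by have := i'.isLt; omega)
    have hFmem : ∀ x, F x ∈ Φ l := by
      intro x
      exact Finset.mem_image_of_mem _ (Finset.mem_range.2 x.isLt)
    have hF'mem : ∀ x, F' x ∈ Φ l := by
      intro x
      rw [himg]
      exact Finset.mem_image_of_mem _ (Finset.mem_range.2 x.isLt)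
    have e1 := Finset.orderEmbOfFin_unique hc hFmem hFmono
    have e2 := Finset.orderEmbOfFin_unique hc hF'mem hF'mono
    have hFF' : F = F' := e1.trans e2.symm
    have henc : ∀ r < 2*(vp l).length, enc d l r = enc d l' r := by
      intro r hr
      have := congrFun hFF' ⟨r, by omega⟩
      simpa [hF, hF'] using this
    have hvp := recover h1 h1' (by rw [h3, h3']) henc
    obtain ⟨hct, hcf⟩ := counts_n h1 h2.1
    obtain ⟨hct', hcf'⟩ := counts_n h1' h2'.1
    exact vp_inj l l' hvp (by rw [hct, hct']) (by rw [hcf, hcf'])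
  have hfin : (T : Set (Finset ℤ)).Finite := T.finite_toSet
  have hle := Set.ncard_le_ncard_of_injOn Φ hmaps hSinj hfin
  rw [Set.ncard_coe_finset] at hle
  have hTcard : T.card = Nat.choose (n + (d - 1) - (d - 1) * kk) (2*kk) := by
    rw [hT, Finset.card_powersetCard, Int.card_Icc]
    congr 1
    omega
  rwa [hTcard] at hle

lemma valleys_le (d n : ℕ) (hd : 1 ≤ d) {l : List Bool} (hl : l.length = 2*n)
    (hD : IsDDyck d l) : (valleyHeights l).length ≤ (n + d - 2) / d := by
  rw [vh_length]
  set k := (vp l).length with hk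
  rcases Nat.eq_zero_or_pos k with h0 | hpos
  · rw [h0]; exact Nat.zero_le _
  have h1 := fact_dchain hD (k-1) (by omega)
  have h2 := fact_Wchain hD.1 (k-1) (by omega)
  have h3 := (fact_last hl hD.1 hpos).1
  have hdk : k * d ≤ n + d - 2 := by
    have c2 : ((k:ℤ)) ≤ (W l (k-1) : ℤ) := by exact_mod_cast (show k ≤ W l (k-1) by omega)
    have c3 : (U l (k-1) : ℤ) + 1 ≤ (n:ℤ) := by exact_mod_cast h3
    have c4 : ((k-1:ℕ):ℤ) = (k:ℤ)-1 := by omega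
    rw [c4] at h1
    have c5 : ((k*d : ℕ):ℤ) = (k:ℤ)*(d:ℤ) := by push_cast; ring
    have c6 : (k:ℤ)*(d:ℤ) ≤ (n:ℤ) + d - 2 := by
      have hk1 : (1:ℤ) ≤ (k:ℤ) := by exact_mod_cast hpos
      nlinarith [h1, c2, c3]
    have c7 : ((n + d - 2 : ℕ):ℤ) = (n:ℤ) + d - 2 := by
      have : 2 ≤ n + d := by
        -- k ≥ 1 means there is a valley, so 2*n ≥ 2
        have := spec l (k-1) (by omega)
        omega
      omega
    omega
  exact (Nat.le_div_iff_mul_le (by omega)).2 hdk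

lemma bound_zero (d n : ℕ) :
    Set.ncard {l : List Bool | l.length = 2 * n ∧ IsDDyck d l ∧
        (valleyHeights l).length = 0} ≤ 1 := by
  have hsub : {l : List Bool | l.length = 2 * n ∧ IsDDyck d l ∧
      (valleyHeights l).length = 0} ⊆
      {List.replicate n true ++ List.replicate n false} := by
    intro l ⟨h1, h2, h3⟩
    rw [vh_length] at h3
    have hvp : vp l = [] := List.length_eq_zero_iff.1 h3
    obtain ⟨hct, hcf⟩ := counts_n h1 h2.1
    have := vp_nil_eq l hvp
    rw [hct, hcf] at this
    simpa using this
  calc Set.ncard _ ≤ Set.ncard {List.replicate n true ++ List.replicate n false} :=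
        Set.ncard_le_ncard hsub (Set.finite_singleton _)
    _ = 1 := Set.ncard_singleton _

lemma total_bound (d n : ℕ) (hd : 1 ≤ d) :
    Set.ncard {l : List Bool | l.length = 2 * n ∧ IsDDyck d l} ≤
      ∑ j ∈ Finset.range ((n + d - 2) / d + 1),
        Nat.choose (n + (d - 1) - (d - 1) * j) (2 * j) := by
  set J := (n + d - 2) / d with hJ
  set Sj : ℕ → Set (List Bool) := fun j =>
    {l : List Bool | l.length = 2 * n ∧ IsDDyck d l ∧ (valleyHeights l).length = j} with hSj
  have hfinall : {l : List Bool | l.length = 2 * n}.Finite := List.finite_length_eq _ _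
  have hfinS : {l : List Bool | l.length = 2 * n ∧ IsDDyck d l}.Finite :=
    hfinall.subset (fun l hl => hl.1)
  have hfinSj : ∀ j, (Sj j).Finite := fun j => hfinall.subset (fun l hl => hl.1)
  have hcover : hfinS.toFinset ⊆ (Finset.range (J+1)).biUnion (fun j => (hfinSj j).toFinset) := by
    intro l hl
    rw [Set.Finite.mem_toFinset] at hl
    rw [Finset.mem_biUnion]
    refine ⟨(valleyHeights l).length, ?_, ?_⟩
    · rw [Finset.mem_range]
      have := valleys_le d n hd hl.1 hl.2
      omega
    · rw [Set.Finite.mem_toFinset]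
      exact ⟨hl.1, hl.2, rfl⟩
  calc Set.ncard {l : List Bool | l.length = 2 * n ∧ IsDDyck d l}
      = hfinS.toFinset.card := Set.ncard_eq_toFinset_card _ hfinS
    _ ≤ ((Finset.range (J+1)).biUnion (fun j => (hfinSj j).toFinset)).card :=
        Finset.card_le_card hcover
    _ ≤ ∑ j ∈ Finset.range (J+1), ((hfinSj j).toFinset).card := Finset.card_biUnion_le
    _ ≤ ∑ j ∈ Finset.range (J+1), Nat.choose (n + (d - 1) - (d - 1) * j) (2 * j) := by
        apply Finset.sum_le_sum
        intro j hj
        rw [← Set.ncard_eq_toFinset_card _ (hfinSj j)]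
        rcases Nat.eq_zero_or_pos j with rfl | hjpos
        · have h1 : (Sj 0).ncard ≤ 1 := bound_zero d n
          have h2 : Nat.choose (n + (d - 1) - (d - 1) * 0) (2 * 0) = 1 := by simp
          rw [h2]
          exact h1
        · exact bound_k d n j hd hjpos

end DDyck

/-- Upper bounds for `d`-Dyck paths: the number of `d`-Dyck paths of
semi-length `n` with exactly `k ≥ 1` valleys is at most
`C(n−(d−1)(k−1), 2k)`; the total number is at most
`∑_{k=0}^{⌊(n+d−2)/d⌋} C(n−(d−1)(k−1), 2k)`; and a `d`-Dyck path of
semi-length `n` has at most `⌊(n+d−2)/d⌋` valleys. -/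
theorem dDyck_bounds (d n k : ℕ) (hd : 1 ≤ d) (hk : 1 ≤ k) :
    Set.ncard {l : List Bool | l.length = 2 * n ∧ IsDDyck d l ∧
        (valleyHeights l).length = k} ≤
      Nat.choose (n + (d - 1) - (d - 1) * k) (2 * k) ∧
    Set.ncard {l : List Bool | l.length = 2 * n ∧ IsDDyck d l} ≤
      ∑ j ∈ Finset.range ((n + d - 2) / d + 1),
        Nat.choose (n + (d - 1) - (d - 1) * j) (2 * j) ∧
    ∀ l : List Bool, l.length = 2 * n → IsDDyck d l →
      (valleyHeights l).length ≤ (n + d - 2) / d :=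
  ⟨DDyck.bound_k d n k hd hk, DDyck.total_bound d n hd,
    fun _ hl hD => DDyck.valleys_le d n hd hl hD⟩
end
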